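/- Let w : ℝ → ℝ be differentiable on (0, ∞) with w t > 0 for all t > 0. Assume: (i) for every t > 0, the functions r ↦ r⁻⁴ · w r and r ↦ r⁻² · (deriv w r)² / (w r) are Lebesgue integrable on (t, ∞); (ii) r⁻³ · w r → 0 as r → ∞; (iii) for every t > 0, t⁻² · deriv w t ≤ −2·t⁻³ · w t + 6 · ∫_{(t,∞)} r⁻⁴ · w r dr − (3/4) · ∫_{(t,∞)} r⁻² · (deriv w r)² / (w r) dr + 4π/t; and (iv) w(δ)/δ → 0 as δ → 0⁺. Then w(t) ≤ 4π·t² for all t > 0. -/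

import Mathlib

open MeasureTheory Filter Real

private lemma aux_sq1 (a r W : ℝ) (ha : 0 ≤ a) (hr : 0 < r) (hW : 0 < W) :
    a * (r ^ 3)⁻¹ ≤ 1 / 2 * ((r ^ 2)⁻¹ * a ^ 2 / W + (r ^ 4)⁻¹ * W) := by
  rw [← sub_nonneg]
  have h : 1 / 2 * ((r ^ 2)⁻¹ * a ^ 2 / W + (r ^ 4)⁻¹ * W) - a * (r ^ 3)⁻¹
      = (a * r - W) ^ 2 / (2 * W * r ^ 4) := by
    field_simp
    ring
  rw [h]; positivity

private lemma aux_sq2 (a r W : ℝ) (hr : 0 < r) (hW : 0 < W) :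
    4 * (a * (r ^ 3)⁻¹ - 3 * ((r ^ 4)⁻¹ * W)) + 8 * ((r ^ 4)⁻¹ * W)
      ≤ (r ^ 2)⁻¹ * a ^ 2 / W := by
  rw [← sub_nonneg]
  have h : (r ^ 2)⁻¹ * a ^ 2 / W
      - (4 * (a * (r ^ 3)⁻¹ - 3 * ((r ^ 4)⁻¹ * W)) + 8 * ((r ^ 4)⁻¹ * W))
      = (a * r - 2 * W) ^ 2 / (W * r ^ 4) := by
    field_simp
    ring
  rw [h]; positivity

theorem energy_bound_from_integro_differential_inequality
    (w : ℝ → ℝ)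
    (hw : DifferentiableOn ℝ w (Set.Ioi 0))
    (hpos : ∀ t > (0 : ℝ), 0 < w t)
    (hint1 : ∀ t > (0 : ℝ),
      IntegrableOn (fun r : ℝ => (r ^ 4)⁻¹ * w r) (Set.Ioi t))
    (hint2 : ∀ t > (0 : ℝ),
      IntegrableOn (fun r : ℝ => (r ^ 2)⁻¹ * (deriv w r) ^ 2 / w r) (Set.Ioi t))
    (hdecay : Tendsto (fun r : ℝ => (r ^ 3)⁻¹ * w r) atTop (nhds 0))
    (hineq : ∀ t > (0 : ℝ),
      (t ^ 2)⁻¹ * deriv w t ≤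
        -2 * (t ^ 3)⁻¹ * w t + 6 * (∫ r in Set.Ioi t, (r ^ 4)⁻¹ * w r)
          - (3 / 4) * (∫ r in Set.Ioi t, (r ^ 2)⁻¹ * (deriv w r) ^ 2 / w r)
          + 4 * π / t)
    (hlim : Tendsto (fun δ => w δ / δ) (nhdsWithin 0 (Set.Ioi 0)) (nhds 0)) :
    ∀ t > (0 : ℝ), w t ≤ 4 * π * t ^ 2 := by
  -- derivative facts
  have hwd : ∀ x > (0 : ℝ), HasDerivAt w (deriv w x) x := fun x hx =>
    (hw.differentiableAt (Ioi_mem_nhds hx)).hasDerivAt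
  -- integrability of deriv w r * (r^3)⁻¹
  have hint3 : ∀ t > (0 : ℝ),
      IntegrableOn (fun r : ℝ => deriv w r * (r ^ 3)⁻¹) (Set.Ioi t) := by
    intro t ht
    have hg : IntegrableOn
        (fun r : ℝ => 1 / 2 * ((r ^ 2)⁻¹ * (deriv w r) ^ 2 / w r + (r ^ 4)⁻¹ * w r))
        (Set.Ioi t) := ((hint2 t ht).add (hint1 t ht)).const_mul _
    refine Integrable.mono' hg ?_ ?_
    · exact ((measurable_deriv w).mul
        ((measurable_id.pow_const 3).inv)).aestronglyMeasurable
    · filter_upwards [ae_restrict_mem measurableSet_Ioi] with r hr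
      have hrpos : 0 < r := lt_trans ht hr
      have hwr : 0 < w r := hpos r hrpos
      have h := aux_sq1 |deriv w r| r (w r) (abs_nonneg _) hrpos hwr
      rw [sq_abs] at h
      calc ‖deriv w r * (r ^ 3)⁻¹‖ = |deriv w r| * (r ^ 3)⁻¹ := by
            rw [norm_mul, Real.norm_eq_abs, Real.norm_eq_abs, abs_inv, abs_pow,
              abs_of_pos hrpos]
        _ ≤ _ := h
  -- FTC on (t, ∞) for w r / r^3
  have hftc : ∀ t > (0 : ℝ),
      (∫ r in Set.Ioi t, (deriv w r * (r ^ 3)⁻¹ - 3 * ((r ^ 4)⁻¹ * w r)))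
        = 0 - w t * (t ^ 3)⁻¹ := by
    intro t ht
    refine integral_Ioi_of_hasDerivAt_of_tendsto (f := fun r : ℝ => w r * (r ^ 3)⁻¹)
      (m := 0) ?_ ?_ ?_ ?_
    · exact (((hwd t ht).continuousAt).mul
        (((continuous_pow 3).continuousAt).inv₀ (pow_ne_zero 3 ht.ne'))).continuousWithinAt
    · intro x hx
      have hx0 : 0 < x := lt_trans ht hx
      have hder := (hwd x hx0).mul ((hasDerivAt_pow 3 x).inv (pow_ne_zero 3 hx0.ne'))
      convert hder using 1
      · rfl
      · rfl
      have hx0' : x ≠ 0 := hx0.ne'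
      simp only [Pi.inv_apply]
      field_simp
      ring
    · exact ((hint3 t ht).sub ((hint1 t ht).const_mul 3))
    · simpa [mul_comm] using hdecay
  -- main pointwise derivative estimate
  have key : ∀ t > (0 : ℝ), deriv w t * t ≤ w t + 4 * π * t ^ 2 := by
    intro t ht
    set I₁ := ∫ r in Set.Ioi t, (r ^ 4)⁻¹ * w r with hI₁
    set I₂ := ∫ r in Set.Ioi t, (r ^ 2)⁻¹ * (deriv w r) ^ 2 / w r with hI₂
    have hC : 8 * I₁ + 4 * (0 - w t * (t ^ 3)⁻¹) ≤ I₂ := by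
      have hI' : IntegrableOn
          (fun r : ℝ => deriv w r * (r ^ 3)⁻¹ - 3 * ((r ^ 4)⁻¹ * w r)) (Set.Ioi t) :=
        (hint3 t ht).sub ((hint1 t ht).const_mul 3)
      have hA : IntegrableOn
          (fun r : ℝ => 4 * (deriv w r * (r ^ 3)⁻¹ - 3 * ((r ^ 4)⁻¹ * w r)))
          (Set.Ioi t) := hI'.const_mul 4
      have hB : IntegrableOn (fun r : ℝ => 8 * ((r ^ 4)⁻¹ * w r)) (Set.Ioi t) :=
        (hint1 t ht).const_mul 8
      have hmono := setIntegral_mono_on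
        (f := fun r : ℝ => 4 * (deriv w r * (r ^ 3)⁻¹ - 3 * ((r ^ 4)⁻¹ * w r))
          + 8 * ((r ^ 4)⁻¹ * w r))
        (g := fun r : ℝ => (r ^ 2)⁻¹ * (deriv w r) ^ 2 / w r)
        (hA.add hB)
        (hint2 t ht) measurableSet_Ioi ?_
      · have heq : (∫ r in Set.Ioi t,
            (4 * (deriv w r * (r ^ 3)⁻¹ - 3 * ((r ^ 4)⁻¹ * w r)) + 8 * ((r ^ 4)⁻¹ * w r)))
            = 4 * (0 - w t * (t ^ 3)⁻¹) + 8 * I₁ := by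
          rw [integral_add hA hB, integral_const_mul, integral_const_mul,
            hftc t ht]
        rw [heq] at hmono
        linarith
      · intro r hr
        have hrpos : 0 < r := lt_trans ht hr
        exact aux_sq2 (deriv w r) r (w r) hrpos (hpos r hrpos)
    have h1 := hineq t ht
    have h2 : (t ^ 2)⁻¹ * deriv w t ≤ (t ^ 3)⁻¹ * w t + 4 * π / t := by
      nlinarith [hC, h1]
    have h3 := mul_le_mul_of_nonneg_left h2 (le_of_lt (pow_pos ht 3))
    have ht0 : t ≠ 0 := ht.ne'
    have e1 : t ^ 3 * ((t ^ 2)⁻¹ * deriv w t) = deriv w t * t := by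
      field_simp
    have e2 : t ^ 3 * ((t ^ 3)⁻¹ * w t + 4 * π / t) = w t + 4 * π * t ^ 2 := by
      field_simp
    rw [e1, e2] at h3
    exact h3
  -- F is antitone on (0, ∞)
  set F : ℝ → ℝ := fun s => w s / s - 4 * π * s with hF_def
  have hFder : ∀ x > (0 : ℝ),
      HasDerivAt F ((deriv w x * x - w x * 1) / x ^ 2 - 4 * π * 1) x := by
    intro x hx
    exact ((hwd x hx).div (hasDerivAt_id x) hx.ne').sub ((hasDerivAt_id x).const_mul (4 * π))
  have hF : AntitoneOn F (Set.Ioi 0) := by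
    apply antitoneOn_of_deriv_nonpos (convex_Ioi 0)
    · exact ((hw.continuousOn).div continuousOn_id (fun x hx => ne_of_gt hx)).sub
        ((continuous_const.mul continuous_id).continuousOn)
    · intro x hx
      rw [interior_Ioi] at hx
      exact (hFder x hx).differentiableAt.differentiableWithinAt
    · intro x hx
      rw [interior_Ioi] at hx
      rw [(hFder x hx).deriv]
      have hk := key x hx
      have hx2 : (0 : ℝ) < x ^ 2 := pow_pos hx 2
      rw [sub_nonpos, div_le_iff₀ hx2]
      nlinarith
  intro t ht
  have hFt : F t ≤ 0 := by
    have h2 : Tendsto (fun δ : ℝ => 4 * π * δ) (nhdsWithin 0 (Set.Ioi 0)) (nhds 0) := by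
      have h : Tendsto (fun δ : ℝ => 4 * π * δ) (nhds 0) (nhds (4 * π * 0)) :=
        (continuous_const.mul continuous_id).tendsto 0
      simpa using h.mono_left nhdsWithin_le_nhds
    have hlim2 : Tendsto F (nhdsWithin 0 (Set.Ioi 0)) (nhds 0) := by
      simpa using hlim.sub h2
    refine ge_of_tendsto hlim2 ?_
    filter_upwards [self_mem_nhdsWithin, Ioo_mem_nhdsGT ht] with δ hδ1 hδ2
    exact hF hδ1 (Set.mem_Ioi.2 ht) (le_of_lt hδ2.2)
  have : w t / t ≤ 4 * π * t := by
    have := hFt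
    simp only [hF_def] at this
    linarith
  calc w t = w t / t * t := by field_simp
    _ ≤ 4 * π * t * t := mul_le_mul_of_nonneg_right this ht.le
    _ = 4 * π * t ^ 2 := by ring
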